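/- Let m ≥ 2, let a₁, …, a_m ≥ 0 and ε ≥ 0. Then clip[∑_{i=1}^m a_i | ε] ≤ 2 ∑_{i=1}^m clip[a_i | ε/(2m)], where clip[a | b] = a if a ≥ b and 0 otherwise. -/

import Mathlib

/-- The clipping operator: `clip a b = a` if `a ≥ b` and `0` otherwise. -/
noncomputable def clip (a b : ℝ) : ℝ := if b ≤ a then a else 0

theorem clip_sum_le_two_sum_clip (m : ℕ) (hm : 2 ≤ m) (a : Fin m → ℝ)
    (ha : ∀ i, 0 ≤ a i) (ε : ℝ) (hε : 0 ≤ ε) :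
    clip (∑ i, a i) ε ≤ 2 * ∑ i, clip (a i) (ε / (2 * m)) := by
  have hm0 : (0:ℝ) < m := by positivity
  have hclip_nonneg : ∀ i, 0 ≤ clip (a i) (ε / (2 * m)) := by
    intro i; unfold clip; split
    · exact ha i
    · exact le_refl 0
  have hsumclip : 0 ≤ ∑ i, clip (a i) (ε / (2 * m)) :=
    Finset.sum_nonneg fun i _ => hclip_nonneg i
  unfold clip
  split
  case isFalse => positivity
  case isTrue h =>
    set t := ε / (2 * m) with ht
    classical
    set S := Finset.univ.filter (fun i => t ≤ a i) with hS
    set Sc := Finset.univ.filter (fun i => ¬ t ≤ a i) with hSc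
    have hsplit : ∑ i ∈ S, a i + ∑ i ∈ Sc, a i = ∑ i, a i :=
      Finset.sum_filter_add_sum_filter_not Finset.univ (fun i => t ≤ a i) a
    have hSc_small : ∑ i ∈ Sc, a i ≤ ε / 2 := by
      have h1 : ∑ i ∈ Sc, a i ≤ Sc.card • t := by
        apply Finset.sum_le_card_nsmul
        intro i hi
        have := (Finset.mem_filter.mp hi).2
        linarith [not_le.mp this]
      have ht0 : 0 ≤ t := by positivity
      have h2 : (Sc.card : ℝ) * t ≤ m * t := by
        apply mul_le_mul_of_nonneg_right _ ht0
        have : Sc.card ≤ m := by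
          calc Sc.card ≤ (Finset.univ : Finset (Fin m)).card := Finset.card_filter_le _ _
            _ = m := Finset.card_univ.trans (Fintype.card_fin m)
        exact_mod_cast this
      have h3 : (m:ℝ) * t = ε / 2 := by
        rw [ht]
        field_simp
      calc ∑ i ∈ Sc, a i ≤ (Sc.card : ℝ) * t := by simpa [nsmul_eq_mul] using h1
        _ ≤ (m:ℝ) * t := h2
        _ = ε / 2 := h3
    have hclip_eq : ∑ i, (if t ≤ a i then a i else 0) = ∑ i ∈ S, a i := by
      simp only [show ∀ i, (if t ≤ a i then a i else 0) = clip (a i) t from fun i => rfl]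
      rw [show (∑ i, clip (a i) t) = ∑ i ∈ S, clip (a i) t + ∑ i ∈ Sc, clip (a i) t from
        (Finset.sum_filter_add_sum_filter_not Finset.univ (fun i => t ≤ a i) _).symm]
      have e1 : ∑ i ∈ S, clip (a i) t = ∑ i ∈ S, a i := by
        apply Finset.sum_congr rfl
        intro i hi
        unfold clip
        rw [if_pos (Finset.mem_filter.mp hi).2]
      have e2 : ∑ i ∈ Sc, clip (a i) t = 0 := by
        apply Finset.sum_eq_zero
        intro i hi
        unfold clip
        rw [if_neg (Finset.mem_filter.mp hi).2]
      rw [e1, e2, add_zero]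
    rw [hclip_eq]
    linarith
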